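/- Let $\iota$ be a finite index type. For each $i \in \iota$, let $K_{x_i x_i}, G_x^i \in \mathbb{R}^{n_x \times n_x}$ with each $G_x^i$ invertible, $K_{x_i u}, G_u^i \in \mathbb{R}^{n_x \times n_u}$, $K_{u x_i} \in \mathbb{R}^{n_u \times n_x}$, $K_{uu} \in \mathbb{R}^{n_u \times n_u}$. Set $G_x := \mathrm{blockdiag}_i(G_x^i)$, $G_u := (G_u^i)_i$ stacked, $K := \begin{bmatrix} \mathrm{blockdiag}_i(K_{x_i x_i}) & (K_{x_i u})_i \\ (K_{u x_i})_i & K_{uu} \end{bmatrix}$, and $Z := \begin{bmatrix} -G_x^{-1} G_u \\ I \end{bmatrix}$. Then $Z^\top K Z = K_{uu} - \sum_{i \in \iota} \big[ (G_u^i)^\top (G_x^i)^{-\top} K_{x_i u} + K_{u x_i} (G_x^i)^{-1} G_u^i - (G_u^i)^\top (G_x^i)^{-\top} K_{x_i x_i} (G_x^i)^{-1} G_u^i \big]$. -/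

import Mathlib

open Matrix

set_option maxHeartbeats 2000000 in
theorem reduced_block_angular_matrix_formula {ι : Type*} [Fintype ι] [DecidableEq ι]
    {nx nu : ℕ}
    (Kxx Gxi : ι → Matrix (Fin nx) (Fin nx) ℝ) (hGxi : ∀ i, IsUnit (Gxi i).det)
    (Kxu Gui : ι → Matrix (Fin nx) (Fin nu) ℝ)
    (Kux : ι → Matrix (Fin nu) (Fin nx) ℝ)
    (Kuu : Matrix (Fin nu) (Fin nu) ℝ)
    (Gx : Matrix (Fin nx × ι) (Fin nx × ι) ℝ) (hGx : Gx = Matrix.blockDiagonal Gxi)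
    (Gu : Matrix (Fin nx × ι) (Fin nu) ℝ)
    (hGu : Gu = Matrix.of fun p j => Gui p.2 p.1 j)
    (K : Matrix ((Fin nx × ι) ⊕ Fin nu) ((Fin nx × ι) ⊕ Fin nu) ℝ)
    (hK : K = Matrix.fromBlocks
      (Matrix.blockDiagonal Kxx)
      (Matrix.of fun p j => Kxu p.2 p.1 j)
      (Matrix.of fun a p => Kux p.2 a p.1)
      Kuu)
    (Z : Matrix ((Fin nx × ι) ⊕ Fin nu) (Fin nu) ℝ)
    (hZ : Z = Matrix.fromRows (-(Gx⁻¹ * Gu)) 1) :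
    Zᵀ * K * Z
      = Kuu - ∑ i, ((Gui i)ᵀ * ((Gxi i)⁻¹)ᵀ * Kxu i
          + Kux i * (Gxi i)⁻¹ * Gui i
          - (Gui i)ᵀ * ((Gxi i)⁻¹)ᵀ * Kxx i * (Gxi i)⁻¹ * Gui i) := by
  have hinv : Gx⁻¹ = Matrix.blockDiagonal fun i => (Gxi i)⁻¹ := by
    rw [hGx]
    apply inv_eq_right_inv
    rw [← Matrix.blockDiagonal_mul]
    simp only [fun i => Matrix.mul_nonsing_inv (Gxi i) (hGxi i)]
    exact Matrix.blockDiagonal_one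
  set M : ι → Matrix (Fin nx) (Fin nu) ℝ := fun i => (Gxi i)⁻¹ * Gui i with hM
  have hH : Gx⁻¹ * Gu = Matrix.of fun p j => M p.2 p.1 j := by
    rw [hinv, hGu]
    ext p j
    simp [hM, Matrix.mul_apply, Matrix.blockDiagonal_apply, Fintype.sum_prod_type_right,
      Prod.ext_iff]
  set H : Matrix (Fin nx × ι) (Fin nu) ℝ := Gx⁻¹ * Gu with hHdef
  have key : Zᵀ * K * Z
      = Kuu - (Hᵀ * (Matrix.of fun p j => Kxu p.2 p.1 j : Matrix (Fin nx × ι) (Fin nu) ℝ)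
          + (Matrix.of fun a p => Kux p.2 a (p.1 : Fin nx) : Matrix (Fin nu) (Fin nx × ι) ℝ) * H
          - Hᵀ * Matrix.blockDiagonal Kxx * H) := by
    rw [hZ, hK, Matrix.transpose_fromRows, Matrix.fromCols_mul_fromBlocks,
      Matrix.fromCols_mul_fromRows]
    simp only [Matrix.transpose_neg, Matrix.transpose_one, Matrix.mul_neg, Matrix.neg_mul,
      Matrix.mul_one, Matrix.one_mul, neg_neg, Matrix.add_mul]
    abel
  have h1 : Hᵀ * (Matrix.of fun p j => Kxu p.2 p.1 j : Matrix (Fin nx × ι) (Fin nu) ℝ) = ∑ i, (M i)ᵀ * Kxu i := by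
    ext j k
    simp only [hH, Matrix.mul_apply, Matrix.transpose_apply, Matrix.of_apply,
      Matrix.sum_apply, Fintype.sum_prod_type_right]
  have h2 : (Matrix.of fun a p => Kux p.2 a (p.1 : Fin nx) : Matrix (Fin nu) (Fin nx × ι) ℝ) * H = ∑ i, Kux i * M i := by
    ext j k
    simp only [hH, Matrix.mul_apply, Matrix.of_apply, Matrix.sum_apply,
      Fintype.sum_prod_type_right]
  have h3 : Hᵀ * Matrix.blockDiagonal Kxx * H = ∑ i, (M i)ᵀ * Kxx i * M i := by
    ext j k
    simp only [hH, Matrix.mul_apply, Matrix.transpose_apply, Matrix.of_apply,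
      Matrix.sum_apply, Fintype.sum_prod_type_right, Matrix.blockDiagonal_apply]
    refine Finset.sum_congr rfl fun i _ => Finset.sum_congr rfl fun y _ => ?_
    congr 1
    simp [Finset.sum_ite_irrel, Finset.sum_ite_eq']
  rw [key, h1, h2, h3]
  congr 1
  rw [Finset.sum_sub_distrib, Finset.sum_add_distrib]
  simp only [hM, Matrix.transpose_mul, Matrix.mul_assoc]
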